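/- Let s1, s2, τ1, τ2, τ3 be real numbers with |τ1| ≤ 1. Then the 4×4 complex matrix M := I⊗I + s1·(σ1⊗I) + s2·(I⊗σ1) + τ1·(σ1⊗σ1) + τ2·(σ2⊗σ2) + τ3·(σ3⊗σ3) is positive semidefinite if and only if the following four conditions hold: 1 + τ1 + s1 + s2 ≥ 0; 1 − τ1 − s1 + s2 ≥ 0; (1 − τ1)² ≥ (s1 − s2)² + (τ2 + τ3)²; and (1 + τ1)² ≥ (s1 + s2)² + (τ2 − τ3)². -/

import Mathlib

open Matrix Kronecker ComplexOrder

noncomputable def σ1 : Matrix (Fin 2) (Fin 2) ℂ := !![0, 1; 1, 0]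
noncomputable def σ2 : Matrix (Fin 2) (Fin 2) ℂ := !![0, -Complex.I; Complex.I, 0]
noncomputable def σ3 : Matrix (Fin 2) (Fin 2) ℂ := !![1, 0; 0, -1]

lemma quadR (α β γ : ℝ) (hα : 0 ≤ α) (hγ : 0 ≤ γ) (hd : β^2 ≤ α*γ) (x y : ℝ) :
    0 ≤ α*x^2 + 2*β*x*y + γ*y^2 := by
  rcases eq_or_lt_of_le hα with h0 | h0
  · have hβ : β = 0 := by nlinarith [sq_nonneg β]
    rw [hβ, ← h0]
    nlinarith [mul_nonneg hγ (sq_nonneg y)]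
  · nlinarith [sq_nonneg (α*x + β*y), mul_nonneg (sub_nonneg.2 hd) (sq_nonneg y)]

lemma detpos (α β γ : ℝ) (h : ∀ x y : ℝ, 0 ≤ α*x^2 + 2*β*x*y + γ*y^2) : β^2 ≤ α*γ := by
  have hα : 0 ≤ α := by have := h 1 0; nlinarith
  have hγ : 0 ≤ γ := by have := h 0 1; nlinarith
  rcases eq_or_lt_of_le hα with h0 | h0
  · have hβ : β = 0 := by
      by_contra hb
      have := h (-(γ + β^2)/(2*β)) 1
      rw [← h0] at this
      field_simp at this
      have hsq : β^2 = 0 := by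
        have hb2 : 0 < β^2 := lt_of_le_of_ne (sq_nonneg β) (Ne.symm (pow_ne_zero 2 hb))
        rw [le_div_iff₀ hb2] at this
        exact le_antisymm (by nlinarith) (sq_nonneg β)
      exact hb (pow_eq_zero_iff (two_ne_zero) |>.mp hsq)
    nlinarith [sq_nonneg β]
  · have := h β (-α)
    nlinarith

noncomputable def Qform (s1 s2 τ1 τ2 τ3 : ℝ) (a b c d : ℂ) : ℝ :=
  (1+τ3)*(a.re^2+a.im^2+d.re^2+d.im^2) + (1-τ3)*(b.re^2+b.im^2+c.re^2+c.im^2)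
  + 2*s2*(a.re*b.re + a.im*b.im + c.re*d.re + c.im*d.im)
  + 2*s1*(a.re*c.re + a.im*c.im + b.re*d.re + b.im*d.im)
  + 2*(τ1-τ2)*(a.re*d.re + a.im*d.im) + 2*(τ1+τ2)*(b.re*c.re + b.im*c.im)

lemma formeq (s1 s2 τ1 τ2 τ3 : ℝ) (x : Fin 2 × Fin 2 → ℂ) :
    star x ⬝ᵥ ((((1 : Matrix (Fin 2) (Fin 2) ℂ) ⊗ₖ (1 : Matrix (Fin 2) (Fin 2) ℂ))
      + (s1 : ℂ) • (σ1 ⊗ₖ (1 : Matrix (Fin 2) (Fin 2) ℂ))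
      + (s2 : ℂ) • ((1 : Matrix (Fin 2) (Fin 2) ℂ) ⊗ₖ σ1)
      + (τ1 : ℂ) • (σ1 ⊗ₖ σ1)
      + (τ2 : ℂ) • (σ2 ⊗ₖ σ2)
      + (τ3 : ℂ) • (σ3 ⊗ₖ σ3)) *ᵥ x)
    = ((Qform s1 s2 τ1 τ2 τ3 (x (0,0)) (x (0,1)) (x (1,0)) (x (1,1)) : ℝ) : ℂ) := by
  simp only [dotProduct, mulVec, Fintype.sum_prod_type, Fin.sum_univ_two,
    Matrix.add_apply, Matrix.smul_apply, Matrix.kroneckerMap_apply, Matrix.one_apply,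
    σ1, σ2, σ3, Matrix.cons_val', Matrix.cons_val_zero, Matrix.cons_val_one, Matrix.head_cons,
    Matrix.head_fin_const, Matrix.empty_val', Matrix.cons_val_fin_one, Pi.star_apply,
    smul_eq_mul]
  norm_num [Qform, Prod.mk_zero_zero, Prod.mk_one_one, ← Complex.ofReal_pow, Complex.ext_iff,
    Complex.mul_re, Complex.mul_im]
  constructor <;> ring

lemma Mherm (s1 s2 τ1 τ2 τ3 : ℝ) :
    ((((1 : Matrix (Fin 2) (Fin 2) ℂ) ⊗ₖ (1 : Matrix (Fin 2) (Fin 2) ℂ))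
      + (s1 : ℂ) • (σ1 ⊗ₖ (1 : Matrix (Fin 2) (Fin 2) ℂ))
      + (s2 : ℂ) • ((1 : Matrix (Fin 2) (Fin 2) ℂ) ⊗ₖ σ1)
      + (τ1 : ℂ) • (σ1 ⊗ₖ σ1)
      + (τ2 : ℂ) • (σ2 ⊗ₖ σ2)
      + (τ3 : ℂ) • (σ3 ⊗ₖ σ3)) : Matrix (Fin 2 × Fin 2) (Fin 2 × Fin 2) ℂ).IsHermitian := by
  show _ = _
  ext ⟨i,j⟩ ⟨k,l⟩
  fin_cases i <;> fin_cases j <;> fin_cases k <;> fin_cases l <;>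
    simp [Matrix.conjTranspose_apply, Matrix.add_apply, Matrix.smul_apply,
      Matrix.kroneckerMap_apply, Matrix.one_apply, σ1, σ2, σ3, Complex.ext_iff, Prod.ext_iff]

/-- the matrix `I⊗I + s1·(σ1⊗I) + s2·(I⊗σ1) + τ1·(σ1⊗σ1) + τ2·(σ2⊗σ2) + τ3·(σ3⊗σ3)`
is positive semidefinite iff the four stated inequalities hold. -/
theorem stmt0 (s1 s2 τ1 τ2 τ3 : ℝ) (hτ1 : |τ1| ≤ 1) :
    (((1 : Matrix (Fin 2) (Fin 2) ℂ) ⊗ₖ (1 : Matrix (Fin 2) (Fin 2) ℂ))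
      + (s1 : ℂ) • (σ1 ⊗ₖ (1 : Matrix (Fin 2) (Fin 2) ℂ))
      + (s2 : ℂ) • ((1 : Matrix (Fin 2) (Fin 2) ℂ) ⊗ₖ σ1)
      + (τ1 : ℂ) • (σ1 ⊗ₖ σ1)
      + (τ2 : ℂ) • (σ2 ⊗ₖ σ2)
      + (τ3 : ℂ) • (σ3 ⊗ₖ σ3)).PosSemidef
    ↔ (0 ≤ 1 + τ1 + s1 + s2 ∧ 0 ≤ 1 - τ1 - s1 + s2 ∧
        (s1 - s2) ^ 2 + (τ2 + τ3) ^ 2 ≤ (1 - τ1) ^ 2 ∧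
        (s1 + s2) ^ 2 + (τ2 - τ3) ^ 2 ≤ (1 + τ1) ^ 2) := by
  obtain ⟨ht1, ht2⟩ := abs_le.mp hτ1
  constructor
  · intro h
    have hA : ∀ x y : ℝ, 0 ≤ (1+τ1+τ3-τ2)*x^2 + 2*(s1+s2)*x*y + (1+τ1+τ2-τ3)*y^2 := by
      intro x y
      have h2 := (Matrix.posSemidef_iff_dotProduct_mulVec.mp h).2 (fun p => (!![(x:ℂ), y; y, x] : Matrix (Fin 2) (Fin 2) ℂ) p.1 p.2)
      rw [formeq, Complex.zero_le_real] at h2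
      simp [Qform] at h2
      nlinarith [h2]
    have hB : ∀ x y : ℝ, 0 ≤ (1-τ1+τ2+τ3)*x^2 + 2*(s2-s1)*x*y + (1-τ1-τ2-τ3)*y^2 := by
      intro x y
      have h2 := (Matrix.posSemidef_iff_dotProduct_mulVec.mp h).2 (fun p => (!![(x:ℂ), y; -y, -x] : Matrix (Fin 2) (Fin 2) ℂ) p.1 p.2)
      rw [formeq, Complex.zero_le_real] at h2
      simp [Qform] at h2
      nlinarith [h2]
    have c4 := detpos _ _ _ hA
    have c3 := detpos _ _ _ hB
    refine ⟨?_, ?_, by nlinarith, by nlinarith⟩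
    · nlinarith [sq_nonneg (1+τ1+s1+s2), sq_nonneg (τ2-τ3)]
    · nlinarith [sq_nonneg (1-τ1-s1+s2), sq_nonneg (τ2+τ3)]
  · rintro ⟨h1, h2, h3, h4⟩
    refine Matrix.posSemidef_iff_dotProduct_mulVec.mpr ⟨Mherm s1 s2 τ1 τ2 τ3, fun x => ?_⟩
    rw [formeq, Complex.zero_le_real]
    have hαA : 0 ≤ 1+τ1+τ3-τ2 := by nlinarith [sq_nonneg (s1+s2)]
    have hγA : 0 ≤ 1+τ1+τ2-τ3 := by nlinarith [sq_nonneg (s1+s2)]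
    have hαB : 0 ≤ 1-τ1+τ2+τ3 := by nlinarith [sq_nonneg (s1-s2)]
    have hγB : 0 ≤ 1-τ1-τ2-τ3 := by nlinarith [sq_nonneg (s1-s2)]
    have hdA : (s1+s2)^2 ≤ (1+τ1+τ3-τ2)*(1+τ1+τ2-τ3) := by nlinarith
    have hdB : (s2-s1)^2 ≤ (1-τ1+τ2+τ3)*(1-τ1-τ2-τ3) := by nlinarith
    set a := x (0,0); set b := x (0,1); set c := x (1,0); set d := x (1,1)
    have r1 := quadR _ _ _ hαA hγA hdA (a.re+d.re) (b.re+c.re)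
    have r2 := quadR _ _ _ hαA hγA hdA (a.im+d.im) (b.im+c.im)
    have r3 := quadR _ _ _ hαB hγB hdB (a.re-d.re) (b.re-c.re)
    have r4 := quadR _ _ _ hαB hγB hdB (a.im-d.im) (b.im-c.im)
    simp only [Qform]
    linarith [r1, r2, r3, r4]
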